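/- Let J, a, b, τ be real numbers and H = J Z⊗Z + a Z⊗I + b I⊗Z. The time-shifted syncopated decoupling scheme (XX-CPMG, XX) — X pulses on qubit 0 after the first and third quarter-interval and X pulses on qubit 1 after the second and fourth — refocuses this Hamiltonian exactly: (I⊗X)·exp(−iτH)·(X⊗I)·exp(−iτH)·(I⊗X)·exp(−iτH)·(X⊗I)·exp(−iτH) = I⊗I, the 4×4 identity matrix, for every real τ. Thus both the ZZ crosstalk and single-qubit dephasing on both qubits are exactly eliminated. -/

import Mathlib

open Matrix Kronecker NormedSpace

set_option maxHeartbeats 1000000 in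
noncomputable section

/-- Pauli X matrix. -/
def PX : Matrix (Fin 2) (Fin 2) ℂ := !![0, 1; 1, 0]
/-- Pauli Y matrix. -/
def PY : Matrix (Fin 2) (Fin 2) ℂ := !![0, -Complex.I; Complex.I, 0]
/-- Pauli Z matrix. -/
def PZ : Matrix (Fin 2) (Fin 2) ℂ := !![1, 0; 0, -1]
/-- 2×2 identity matrix. -/
def PI : Matrix (Fin 2) (Fin 2) ℂ := 1

/-- Two-qubit operators: 4×4 matrices indexed by `Fin 2 × Fin 2`. -/
abbrev Mat4 := Matrix (Fin 2 × Fin 2) (Fin 2 × Fin 2) ℂ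

/-- The time-shifted syncopated scheme (XX-CPMG, XX) exactly refocuses
`H = J Z⊗Z + a Z⊗I + b I⊗Z`: the full pulsed evolution is the 4×4 identity for every τ. -/
theorem shifted_syncopation_exactly_refocuses_ZZ_and_dephasing
    (J a b τ : ℝ) (H : Mat4)
    (hH : H = (J : ℂ) • (PZ ⊗ₖ PZ) + (a : ℂ) • (PZ ⊗ₖ PI) + (b : ℂ) • (PI ⊗ₖ PZ)) :
    (PI ⊗ₖ PX) * exp ((-(Complex.I * (τ : ℂ))) • H) *
      (PX ⊗ₖ PI) * exp ((-(Complex.I * (τ : ℂ))) • H) *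
      (PI ⊗ₖ PX) * exp ((-(Complex.I * (τ : ℂ))) • H) *
      (PX ⊗ₖ PI) * exp ((-(Complex.I * (τ : ℂ))) • H) = PI ⊗ₖ PI := by
  set c : ℂ := -(Complex.I * (τ : ℂ)) with hc
  have hdiag : c • H = Matrix.diagonal (fun p : Fin 2 × Fin 2 =>
      c * (if p.1 = 0 then (1:ℂ) else -1) * (if p.2 = 0 then (1:ℂ) else -1) * (J:ℂ)
        + c * (if p.1 = 0 then (1:ℂ) else -1) * (a:ℂ)
        + c * (if p.2 = 0 then (1:ℂ) else -1) * (b:ℂ)) := by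
    subst hH
    ext ⟨i, j⟩ ⟨k, l⟩
    fin_cases i <;> fin_cases j <;> fin_cases k <;> fin_cases l <;>
      norm_num [PZ, PI, Matrix.diagonal, Matrix.one_apply, Prod.ext_iff] <;> ring
  rw [hdiag, Matrix.exp_diagonal]
  ext ⟨i, j⟩ ⟨k, l⟩
  fin_cases i <;> fin_cases j <;> fin_cases k <;> fin_cases l <;>
    simp [PX, PI, Matrix.mul_apply, Fintype.sum_prod_type, Fin.sum_univ_two,
      Matrix.diagonal, Matrix.one_apply, ← NormedSpace.exp_add] <;>
    · ring_nf
      simp
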